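/- Let Λ = diag(λ₁,…,λ_n) be a diagonal real matrix and let k : ℝ → Matrix (Fin n) (Fin n) ℝ satisfy, for every t, k'(t) = M(k(t)·Λ·k(t)ᵀ)·k(t) and the orthogonality condition k(t)ᵀ·k(t) = 1. Write L(t) = k(t)·Λ·k(t)ᵀ. Then each entry of the first row of k is a semiinvariant of the Toda flow: for every column index i and every t, the function t ↦ k(t)_{1i} satisfies (k(t)_{1i})′ = (λ_i − L(t)_{11})·k(t)_{1i} (rows and columns of an n×n matrix are indexed by Fin n, with '1' denoting the first index, i.e. index 0). -/

import Mathlib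

open Matrix

attribute [local instance] Matrix.normedAddCommGroup Matrix.normedSpace

/-- The Toda projection: `M(A)_{ij} = A_{ij}` for `i < j`, `M(A)_{ij} = -A_{ji}` for
`i > j`, and `M(A)_{ii} = 0`. -/
def todaProj {n : ℕ} (A : Matrix (Fin n) (Fin n) ℝ) : Matrix (Fin n) (Fin n) ℝ :=
  Matrix.of fun i j => if i < j then A i j else if j < i then -A j i else 0

/-- Each entry of the first row of an orthogonal solution `k(t)` of
`k' = M(k·Λ·kᵀ)·k` with `Λ = diag(λ)` is a semiinvariant of the Toda flow:
`(k_{1i})′ = (λ_i − L_{11})·k_{1i}` where `L = k·Λ·kᵀ` and `1` denotes the first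
index (index `0` of `Fin (n+1)`). -/
theorem first_row_semiinvariant {n : ℕ} (lam : Fin (n + 1) → ℝ)
    (k : ℝ → Matrix (Fin (n + 1)) (Fin (n + 1)) ℝ)
    (hk : ∀ t, HasDerivAt k
      (todaProj (k t * Matrix.diagonal lam * (k t)ᵀ) * k t) t)
    (horth : ∀ t, (k t)ᵀ * k t = 1) :
    ∀ (i : Fin (n + 1)) (t : ℝ),
      HasDerivAt (fun t => k t 0 i)
        ((lam i - (k t * Matrix.diagonal lam * (k t)ᵀ) 0 0) * k t 0 i) t := by
  intro i t
  set L := k t * Matrix.diagonal lam * (k t)ᵀ with hL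
  -- entry evaluation as a continuous linear map
  let E : Matrix (Fin (n + 1)) (Fin (n + 1)) ℝ →ₗ[ℝ] ℝ :=
    (LinearMap.proj i).comp (LinearMap.proj (R := ℝ) (φ := fun _ : Fin (n+1) => Fin (n+1) → ℝ) 0)
  have hE : HasDerivAt (fun t => k t 0 i) ((todaProj L * k t) 0 i) t := by
    have := E.toContinuousLinearMap.hasFDerivAt.comp_hasDerivAt t (hk t)
    exact this
  have hLk : L * k t = k t * Matrix.diagonal lam := by
    rw [hL, Matrix.mul_assoc, horth t, Matrix.mul_one]
  have h2 : (L * k t) 0 i = lam i * k t 0 i := by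
    rw [hLk, Matrix.mul_apply]
    simp [Matrix.diagonal, mul_comm]
  have h1 : (todaProj L * k t) 0 i = (L * k t) 0 i - L 0 0 * k t 0 i := by
    rw [Matrix.mul_apply, Matrix.mul_apply, Fin.sum_univ_succ, Fin.sum_univ_succ]
    simp [todaProj, Fin.succ_pos]
  have : (todaProj L * k t) 0 i = (lam i - L 0 0) * k t 0 i := by
    rw [h1, h2]; ring
  rwa [this] at hE
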